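/- For every positive integer n, every real α with 0 < α ≤ 1/n and every real x ≥ 0, the third and fourth central moments satisfy Θ_{n,3}^[α](x) = (2α²n³x + 9αn²x + 12nx + 6)/n³ and Θ_{n,4}^[α](x) = (3α²n⁴x(2α + x) + 4αn³x(8α + 3x) + 12n²x(6α + x) + 72nx + 24)/n⁴. -/

import Mathlib

open MeasureTheory Filter

noncomputable section

/-- The Szász basis function `e^(-nu) (nu)^i / i!`. -/
def szaszBasis (n i : ℕ) (u : ℝ) : ℝ :=
  Real.exp (-(n : ℝ) * u) * ((n : ℝ) * u) ^ i / (Nat.factorial i : ℝ)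

/-- The rising factorial `x^(i,-α) = ∏_{j=0}^{i-1} (x + jα)` with increment `α`. -/
def risingFac (x α : ℝ) (i : ℕ) : ℝ :=
  ∏ j ∈ Finset.range i, (x + (j : ℝ) * α)

/-- The Durrmeyer modification of the generalized Szász-Mirakjan operators:
`U_n^[α](f; x) = n Σ_i (1+nα)^(−x/α) (α+1/n)^(−i) x^(i,−α)/i! ∫_0^∞ e^(−nu)(nu)^i/i! f(u) du`. -/
def U (n : ℕ) (α : ℝ) (f : ℝ → ℝ) (x : ℝ) : ℝ :=
  (n : ℝ) * ∑' i : ℕ,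
    (1 + (n : ℝ) * α) ^ (-x / α) * (α + 1 / (n : ℝ)) ^ (-(i : ℤ)) *
      (risingFac x α i / (Nat.factorial i : ℝ)) *
      ∫ u in Set.Ioi (0 : ℝ), szaszBasis n i u * f u

/-- The `m`-th central moment `Θ_{n,m}^[α](x) = U_n^[α]((t−x)^m; x)`. -/
def theta (n : ℕ) (α : ℝ) (m : ℕ) (x : ℝ) : ℝ :=
  U n α (fun t => (t - x) ^ m) x

end

open Set Real


lemma integrableOn_pow_mul_exp {r : ℝ} (hr : 0 < r) (k : ℕ) :
    IntegrableOn (fun u : ℝ => u ^ k * Real.exp (-(r * u))) (Set.Ioi 0) := by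
  have h := Real.GammaIntegral_convergent (s := (k : ℝ) + 1) (by positivity)
  rw [show (0:ℝ) = r * 0 by ring] at h
  have h2 := (integrableOn_Ioi_comp_mul_left_iff
    (fun x : ℝ => Real.exp (-x) * x ^ ((k : ℝ) + 1 - 1)) 0 hr).mpr h
  have h3 : IntegrableOn
      (fun x : ℝ => (r ^ k : ℝ)⁻¹ * (Real.exp (-(r * x)) * (r * x) ^ ((k:ℝ) + 1 - 1)))
      (Set.Ioi 0) := h2.const_mul _
  refine h3.congr_fun (fun u hu => ?_) measurableSet_Ioi
  have hu0 : (0:ℝ) < u := hu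
  beta_reduce
  rw [add_sub_cancel_right, Real.rpow_natCast]
  field_simp [mul_pow]
  ring

lemma integral_pow_mul_exp {r : ℝ} (hr : 0 < r) (k : ℕ) :
    ∫ u in Set.Ioi (0:ℝ), u ^ k * Real.exp (-(r * u)) = (Nat.factorial k : ℝ) / r ^ (k + 1) := by
  have h := integral_rpow_mul_exp_neg_mul_Ioi (a := (k : ℝ) + 1) (r := r) (by positivity) hr
  rw [Real.Gamma_nat_eq_factorial,
    show (k:ℝ) + 1 = ((k+1:ℕ):ℝ) by push_cast; ring, Real.rpow_natCast] at h
  have hr' : r ≠ 0 := hr.ne'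
  calc ∫ u in Set.Ioi (0:ℝ), u ^ k * Real.exp (-(r * u))
      = ∫ t in Set.Ioi (0:ℝ), t ^ (((k+1:ℕ):ℝ) - 1) * Real.exp (-(r * t)) := by
        refine (setIntegral_congr_fun measurableSet_Ioi (fun u hu => ?_)).symm
        have hu0 : (0:ℝ) < u := hu
        rw [show ((k+1 : ℕ) : ℝ) - 1 = ((k:ℕ) : ℝ) by push_cast; ring, Real.rpow_natCast]
    _ = (1 / r) ^ (k+1) * (Nat.factorial k : ℝ) := h
    _ = (Nat.factorial k : ℝ) / r ^ (k + 1) := by rw [div_pow, one_pow]; ring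

noncomputable section
/-- auxiliary: `1/(i-r)!` with the convention `0` for `i < r`. -/
def lahG (r i : ℕ) : ℝ := if r ≤ i then ((Nat.factorial (i - r) : ℝ))⁻¹ else 0
end

lemma risingFac_def (x α : ℝ) (i : ℕ) :
    risingFac x α i = ∏ j ∈ Finset.range i, (x + (j : ℝ) * α) := rfl

lemma risingFac_succ (x α : ℝ) (i : ℕ) :
    risingFac x α (i + 1) = risingFac x α i * (x + i * α) := by
  rw [risingFac_def, Finset.prod_range_succ, ← risingFac_def]

lemma risingFac_nonneg {x α : ℝ} (hx : 0 ≤ x) (hα : 0 ≤ α) (i : ℕ) :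
    0 ≤ risingFac x α i :=
  Finset.prod_nonneg fun j _ => by positivity

lemma risingFac_scale {α : ℝ} (hα : α ≠ 0) (y : ℝ) (j : ℕ) :
    risingFac y α j = α ^ j * risingFac (y / α) 1 j := by
  induction j with
  | zero => simp [risingFac]
  | succ j ih =>
      rw [risingFac_succ, risingFac_succ, ih, pow_succ]
      field_simp

lemma risingFac_add (x α : ℝ) (r j : ℕ) :
    risingFac x α (r + j) = risingFac x α r * risingFac (x + r * α) α j := by
  rw [risingFac, risingFac, risingFac, Finset.prod_range_add]
  congr 1
  refine Finset.prod_congr rfl fun k _ => ?_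
  push_cast
  ring

lemma fact_add (j r : ℕ) :
    ((j + r).factorial : ℝ) = (j.factorial : ℝ) * ∏ k ∈ Finset.range r, ((j : ℝ) + k + 1) := by
  induction r with
  | zero => simp
  | succ r ih =>
      rw [show j + (r+1) = (j + r) + 1 from rfl, Nat.factorial_succ, Finset.prod_range_succ]
      push_cast
      rw [ih]
      ring

lemma lahG_zero (i : ℕ) : lahG 0 i = ((i.factorial : ℝ))⁻¹ := by
  simp [lahG]

lemma lah1 (i : ℕ) : ((i+1).factorial : ℝ) * ((i.factorial : ℝ))⁻¹ * ((i.factorial : ℝ))⁻¹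
    = lahG 1 i + lahG 0 i := by
  rcases Nat.lt_or_ge i 1 with h | h
  · interval_cases i <;> norm_num [lahG, Nat.factorial]
  · obtain ⟨j, rfl⟩ := Nat.exists_eq_add_of_le h
    have e1 : lahG 1 (1 + j) = ((j.factorial : ℝ))⁻¹ := by
      rw [lahG, if_pos (by omega), show 1 + j - 1 = j by omega]
    have e0 : lahG 0 (1 + j) = (((1+j).factorial : ℝ))⁻¹ := lahG_zero _
    rw [e1, e0, show 1 + j + 1 = j + 2 by omega, show 1 + j = j + 1 by omega,
      fact_add j 2, fact_add j 1]
    have hj : (j.factorial : ℝ) ≠ 0 := Nat.cast_ne_zero.2 j.factorial_ne_zero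
    simp only [Finset.prod_range_succ, Finset.prod_range_zero, one_mul]
    field_simp
    ring

lemma lah2 (i : ℕ) : ((i+2).factorial : ℝ) * ((i.factorial : ℝ))⁻¹ * ((i.factorial : ℝ))⁻¹
    = lahG 2 i + 4 * lahG 1 i + 2 * lahG 0 i := by
  rcases Nat.lt_or_ge i 2 with h | h
  · interval_cases i <;> norm_num [lahG, Nat.factorial]
  · obtain ⟨j, rfl⟩ := Nat.exists_eq_add_of_le h
    have e2 : lahG 2 (2 + j) = (((j + 0).factorial : ℝ))⁻¹ := by
      rw [lahG, if_pos (by omega), show 2 + j - 2 = j + 0 by omega]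
    have e1 : lahG 1 (2 + j) = (((j + 1).factorial : ℝ))⁻¹ := by
      rw [lahG, if_pos (by omega), show 2 + j - 1 = j + 1 by omega]
    have e0 : lahG 0 (2 + j) = (((j + 2).factorial : ℝ))⁻¹ := by
      rw [lahG, if_pos (by omega), show 2 + j - 0 = j + 2 by omega]
    rw [e2, e1, e0, show 2 + j + 2 = j + 4 by omega, show 2 + j = j + 2 by omega,
      fact_add j 4, fact_add j 2, fact_add j 1]
    have hj : (j.factorial : ℝ) ≠ 0 := Nat.cast_ne_zero.2 j.factorial_ne_zero
    simp only [Finset.prod_range_succ, Finset.prod_range_zero, one_mul]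
    field_simp
    ring

lemma lah3 (i : ℕ) : ((i+3).factorial : ℝ) * ((i.factorial : ℝ))⁻¹ * ((i.factorial : ℝ))⁻¹
    = lahG 3 i + 9 * lahG 2 i + 18 * lahG 1 i + 6 * lahG 0 i := by
  rcases Nat.lt_or_ge i 3 with h | h
  · interval_cases i <;> norm_num [lahG, Nat.factorial]
  · obtain ⟨j, rfl⟩ := Nat.exists_eq_add_of_le h
    have e3 : lahG 3 (3 + j) = (((j + 0).factorial : ℝ))⁻¹ := by
      rw [lahG, if_pos (by omega), show 3 + j - 3 = j + 0 by omega]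
    have e2 : lahG 2 (3 + j) = (((j + 1).factorial : ℝ))⁻¹ := by
      rw [lahG, if_pos (by omega), show 3 + j - 2 = j + 1 by omega]
    have e1 : lahG 1 (3 + j) = (((j + 2).factorial : ℝ))⁻¹ := by
      rw [lahG, if_pos (by omega), show 3 + j - 1 = j + 2 by omega]
    have e0 : lahG 0 (3 + j) = (((j + 3).factorial : ℝ))⁻¹ := by
      rw [lahG, if_pos (by omega), show 3 + j - 0 = j + 3 by omega]
    rw [e3, e2, e1, e0, show 3 + j + 3 = j + 6 by omega, show 3 + j = j + 3 by omega,
      fact_add j 6, fact_add j 3, fact_add j 2, fact_add j 1]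
    have hj : (j.factorial : ℝ) ≠ 0 := Nat.cast_ne_zero.2 j.factorial_ne_zero
    simp only [Finset.prod_range_succ, Finset.prod_range_zero, one_mul]
    field_simp
    ring

lemma lah4 (i : ℕ) : ((i+4).factorial : ℝ) * ((i.factorial : ℝ))⁻¹ * ((i.factorial : ℝ))⁻¹
    = lahG 4 i + 16 * lahG 3 i + 72 * lahG 2 i + 96 * lahG 1 i + 24 * lahG 0 i := by
  rcases Nat.lt_or_ge i 4 with h | h
  · interval_cases i <;> norm_num [lahG, Nat.factorial]
  · obtain ⟨j, rfl⟩ := Nat.exists_eq_add_of_le h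
    have e4 : lahG 4 (4 + j) = (((j + 0).factorial : ℝ))⁻¹ := by
      rw [lahG, if_pos (by omega), show 4 + j - 4 = j + 0 by omega]
    have e3 : lahG 3 (4 + j) = (((j + 1).factorial : ℝ))⁻¹ := by
      rw [lahG, if_pos (by omega), show 4 + j - 3 = j + 1 by omega]
    have e2 : lahG 2 (4 + j) = (((j + 2).factorial : ℝ))⁻¹ := by
      rw [lahG, if_pos (by omega), show 4 + j - 2 = j + 2 by omega]
    have e1 : lahG 1 (4 + j) = (((j + 3).factorial : ℝ))⁻¹ := by
      rw [lahG, if_pos (by omega), show 4 + j - 1 = j + 3 by omega]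
    have e0 : lahG 0 (4 + j) = (((j + 4).factorial : ℝ))⁻¹ := by
      rw [lahG, if_pos (by omega), show 4 + j - 0 = j + 4 by omega]
    rw [e4, e3, e2, e1, e0, show 4 + j + 4 = j + 8 by omega, show 4 + j = j + 4 by omega,
      fact_add j 8, fact_add j 4, fact_add j 3, fact_add j 2, fact_add j 1]
    have hj : (j.factorial : ℝ) ≠ 0 := Nat.cast_ne_zero.2 j.factorial_ne_zero
    simp only [Finset.prod_range_succ, Finset.prod_range_zero, one_mul]
    field_simp
    ring

noncomputable section


lemma integrableOn_rpow_mul_exp {r : ℝ} (hr : 0 < r) {s : ℝ} (hs : 0 < s) :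
    IntegrableOn (fun u : ℝ => u ^ (s - 1) * Real.exp (-(r * u))) (Set.Ioi 0) := by
  have h := Real.GammaIntegral_convergent hs
  rw [show (0:ℝ) = r * 0 by ring] at h
  have h2 := (integrableOn_Ioi_comp_mul_left_iff
    (fun x : ℝ => Real.exp (-x) * x ^ (s - 1)) 0 hr).mpr h
  have h3 : IntegrableOn
      (fun x : ℝ => (r ^ (s-1) : ℝ)⁻¹ * (Real.exp (-(r * x)) * (r * x) ^ (s - 1)))
      (Set.Ioi 0) := h2.const_mul _
  refine h3.congr_fun (fun u hu => ?_) measurableSet_Ioi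
  have hu0 : (0:ℝ) < u := hu
  beta_reduce
  rw [Real.mul_rpow hr.le hu0.le]
  have : (r:ℝ) ^ (s-1) ≠ 0 := (Real.rpow_pos_of_pos hr _).ne'
  field_simp

lemma risingFac_eq_gamma {s : ℝ} (hs : 0 < s) (j : ℕ) :
    risingFac s 1 j = Real.Gamma (s + j) / Real.Gamma s := by
  induction j with
  | zero => simp [risingFac, div_self (Real.Gamma_pos_of_pos hs).ne']
  | succ j ih =>
      rw [risingFac, Finset.prod_range_succ, ← risingFac, ih]
      have h1 : (0:ℝ) < s + j := by positivity
      rw [show s + (↑(j+1):ℝ) = (s + j) + 1 by push_cast; ring, Real.Gamma_add_one h1.ne']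
      field_simp

lemma hasSum_negBinomial {s t : ℝ} (hs : 0 ≤ s) (ht0 : 0 ≤ t) (ht1 : t < 1) :
    HasSum (fun j : ℕ => risingFac s 1 j * t ^ j / (Nat.factorial j : ℝ))
      ((1 - t) ^ (-s) : ℝ) := by
  rcases eq_or_lt_of_le hs with rfl | hs
  · have h0 : ∀ j : ℕ, j ≠ 0 → risingFac 0 1 j * t ^ j / (Nat.factorial j : ℝ) = 0 := by
      intro j hj
      have : risingFac 0 1 j = 0 := by
        rw [risingFac]
        refine Finset.prod_eq_zero (i := 0) ?_ (by norm_num)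
        simpa using Nat.pos_of_ne_zero hj
      simp [this]
    have := hasSum_single (f := fun j : ℕ => risingFac 0 1 j * t ^ j / (Nat.factorial j : ℝ)) 0 h0
    simpa [risingFac] using this
  · -- main case s > 0
    have h1t : (0:ℝ) < 1 - t := by linarith
    have hΓ : (0:ℝ) < Real.Gamma s := Real.Gamma_pos_of_pos hs
    set ψ : ℕ → ℝ := fun j => Real.Gamma (s + j) * t ^ j / (Nat.factorial j : ℝ) with hψ
    have hψnn : ∀ j, 0 ≤ ψ j := by
      intro j
      have := Real.Gamma_pos_of_pos (show (0:ℝ) < s + j by positivity)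
      positivity
    -- the integrand family
    set F : ℕ → ℝ → ℝ := fun j u => (u ^ (s - 1) * Real.exp (-u)) * ((t*u) ^ j / (Nat.factorial j : ℝ)) with hF
    have hFnn : ∀ j, ∀ u ∈ Set.Ioi (0:ℝ), 0 ≤ F j u := by
      intro j u hu
      have hu0 : (0:ℝ) < u := hu
      have h1 : (0:ℝ) ≤ u ^ (s-1) := (Real.rpow_pos_of_pos hu0 _).le
      have h2 : (0:ℝ) ≤ t * u := by positivity
      positivity
    have hFint : ∀ j, IntegrableOn (F j) (Set.Ioi 0) := by
      intro j
      have h := integrableOn_rpow_mul_exp one_pos (show (0:ℝ) < s + j by positivity)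
      have h2 : IntegrableOn
          (fun u : ℝ => (t ^ j / (Nat.factorial j : ℝ)) * (u ^ (s + j - 1) * Real.exp (-(1 * u))))
          (Set.Ioi 0) := h.const_mul _
      refine h2.congr_fun (fun u hu => ?_) measurableSet_Ioi
      have hu0 : (0:ℝ) < u := hu
      rw [hF]
      simp only [one_mul]
      rw [show s + j - 1 = (s - 1) + j by ring, Real.rpow_add hu0, Real.rpow_natCast,
        mul_pow]
      ring
    have hFval : ∀ j, ∫ u in Set.Ioi (0:ℝ), F j u = ψ j := by
      intro j
      have hsj : (0:ℝ) < s + j := by positivity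
      have hΓj := Real.Gamma_eq_integral hsj
      have : ∫ u in Set.Ioi (0:ℝ), F j u
          = ∫ u in Set.Ioi (0:ℝ), (t ^ j / (Nat.factorial j : ℝ)) * (Real.exp (-u) * u ^ (s + j - 1)) := by
        refine setIntegral_congr_fun measurableSet_Ioi (fun u hu => ?_)
        have hu0 : (0:ℝ) < u := hu
        rw [hF]
        simp only []
        rw [show s + j - 1 = (s - 1) + j by ring, Real.rpow_add hu0, Real.rpow_natCast,
          mul_pow]
        ring
      rw [this, MeasureTheory.integral_const_mul, ← hΓj, hψ]
      ring
    have hmeas : ∀ j : ℕ, AEMeasurable (fun u => ENNReal.ofReal (F j u))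
        (volume.restrict (Set.Ioi 0)) := by
      intro j
      apply Measurable.aemeasurable
      apply Measurable.ennreal_ofReal
      fun_prop
    have key : (∑' j, ENNReal.ofReal (ψ j)) = ENNReal.ofReal (Real.Gamma s * (1-t) ^ (-s)) := by
      have h1 : ∀ j, ENNReal.ofReal (ψ j) = ∫⁻ u in Set.Ioi 0, ENNReal.ofReal (F j u) := by
        intro j
        rw [← hFval j]
        exact MeasureTheory.ofReal_integral_eq_lintegral_ofReal (hFint j)
          ((ae_restrict_iff' measurableSet_Ioi).2 (ae_of_all _ (hFnn j)))
      simp_rw [h1]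
      rw [← MeasureTheory.lintegral_tsum hmeas]
      have h2 : ∫⁻ u in Set.Ioi 0, (∑' j, ENNReal.ofReal (F j u))
          = ∫⁻ u in Set.Ioi 0, ENNReal.ofReal (u ^ (s-1) * Real.exp (-((1-t) * u))) := by
        refine setLIntegral_congr_fun measurableSet_Ioi (fun u hu => ?_)
        have hu0 : (0:ℝ) < u := hu
        rw [← ENNReal.ofReal_tsum_of_nonneg (fun j => hFnn j u hu)
          ((Real.summable_pow_div_factorial (t*u)).mul_left _)]
        congr 1
        rw [hF]
        simp only []
        rw [tsum_mul_left]
        have hexp : (∑' j : ℕ, (t*u) ^ j / (Nat.factorial j : ℝ)) = Real.exp (t*u) := by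
          rw [Real.exp_eq_exp_ℝ, NormedSpace.exp_eq_tsum_div]
        rw [hexp, mul_assoc, ← Real.exp_add, show -u + t*u = -((1-t)*u) by ring]
      rw [h2, ← MeasureTheory.ofReal_integral_eq_lintegral_ofReal
        (integrableOn_rpow_mul_exp h1t hs)
        ((ae_restrict_iff' measurableSet_Ioi).2 (ae_of_all _ (fun u hu => by
          have hu0 : (0:ℝ) < u := hu
          have := Real.rpow_pos_of_pos hu0 (s-1)
          positivity))),
        integral_rpow_mul_exp_neg_mul_Ioi hs h1t]
      rw [one_div, Real.inv_rpow h1t.le, ← Real.rpow_neg h1t.le]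
      ring_nf
    have hfin : (∑' j, ENNReal.ofReal (ψ j)) ≠ ⊤ := by
      rw [key]; exact ENNReal.ofReal_ne_top
    have hsummable : Summable ψ := by
      refine (ENNReal.summable_toReal hfin).congr (fun j => ?_)
      rw [ENNReal.toReal_ofReal (hψnn j)]
    have htsum : ∑' j, ψ j = Real.Gamma s * (1-t) ^ (-s) := by
      have h := (ENNReal.ofReal_tsum_of_nonneg hψnn hsummable).trans key
      have hpos : (0:ℝ) ≤ Real.Gamma s * (1-t) ^ (-s) := by
        have := Real.rpow_pos_of_pos h1t (-s); positivity
      exact (ENNReal.ofReal_eq_ofReal_iff (tsum_nonneg hψnn) hpos).1 h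
    have hψsum : HasSum ψ (Real.Gamma s * (1-t) ^ (-s)) := hsummable.hasSum_iff.mpr htsum
    have h := hψsum.div_const (Real.Gamma s)
    rw [mul_comm, mul_div_assoc, div_self hΓ.ne', mul_one] at h
    have hfinal : (fun j => ψ j / Real.Gamma s)
        = fun j => risingFac s 1 j * t ^ j / (Nat.factorial j : ℝ) := by
      funext j
      rw [risingFac_eq_gamma hs, hψ]
      ring
    exact hfinal ▸ h

lemma hasSum_base (n : ℕ) (hn : 0 < n) {α : ℝ} (hα : 0 < α) {y : ℝ} (hy : 0 ≤ y) :
    HasSum (fun j : ℕ => risingFac y α j * ((α + 1/(n:ℝ))⁻¹) ^ j / (Nat.factorial j : ℝ))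
      ((1 + (n:ℝ) * α) ^ (y / α)) := by
  have hn' : (0:ℝ) < n := by exact_mod_cast hn
  set c : ℝ := 1 + n * α with hc
  have hc0 : (0:ℝ) < c := by positivity
  set z : ℝ := (α + 1/(n:ℝ))⁻¹ with hz
  have hzval : z = n / c := by
    rw [hz, hc]
    rw [show α + 1/(n:ℝ) = (1 + n*α)/n by field_simp; ring, inv_div]
  have ht0 : 0 ≤ α * z := by
    have : 0 < z := by rw [hzval]; positivity
    positivity
  have h1t : 1 - α * z = c⁻¹ := by
    rw [hzval, hc]
    field_simp
    ring
  have ht1 : α * z < 1 := by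
    have : (0:ℝ) < c⁻¹ := by positivity
    linarith [h1t]
  have hb := hasSum_negBinomial (s := y/α) (t := α*z) (by positivity) ht0 ht1
  have hterm : (fun j : ℕ => risingFac (y/α) 1 j * (α*z)^j / (Nat.factorial j : ℝ))
      = fun j : ℕ => risingFac y α j * z^j / (Nat.factorial j : ℝ) := by
    funext j
    rw [risingFac_scale hα.ne' y, mul_pow]
    ring
  have hval : (1 - α*z) ^ (-(y/α)) = c ^ (y/α) := by
    rw [h1t, Real.inv_rpow hc0.le, ← Real.rpow_neg hc0.le, neg_neg]
  rw [hterm, hval] at hb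
  exact hb

lemma hasSum_fr (n : ℕ) (hn : 0 < n) {α x : ℝ} (hα : 0 < α) (hx : 0 ≤ x) (r : ℕ) :
    HasSum (fun i : ℕ => (1 + (n:ℝ) * α) ^ (-x / α) * ((α + 1/(n:ℝ))⁻¹) ^ i *
        risingFac x α i * lahG r i)
      ((n:ℝ) ^ r * risingFac x α r) := by
  have hn' : (0:ℝ) < n := by exact_mod_cast hn
  set c : ℝ := 1 + n * α with hc
  have hc0 : (0:ℝ) < c := by positivity
  set z : ℝ := (α + 1/(n:ℝ))⁻¹ with hz
  have hzval : z = n / c := by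
    rw [hz, hc]
    rw [show α + 1/(n:ℝ) = (1 + n*α)/n by field_simp; ring, inv_div]
  set C : ℝ := c ^ (-x/α) with hC
  set f : ℕ → ℝ := fun i => C * z ^ i * risingFac x α i * lahG r i with hf
  have hy : (0:ℝ) ≤ x + r * α := by positivity
  have hb := (hasSum_base n hn hα hy).mul_left (C * z ^ r * risingFac x α r)
  have hval : C * z ^ r * risingFac x α r * c ^ ((x + r*α)/α)
      = (n:ℝ) ^ r * risingFac x α r := by
    have hee : -x/α + (x + r*α)/α = (r:ℝ) := by field_simp; ring
    calc C * z ^ r * risingFac x α r * c ^ ((x + r*α)/α)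
        = z ^ r * risingFac x α r * (c ^ (-x/α) * c ^ ((x + r*α)/α)) := by rw [hC]; ring
      _ = z ^ r * risingFac x α r * c ^ ((r:ℕ):ℝ) := by
          rw [← Real.rpow_add hc0, hee]
      _ = (z*c) ^ r * risingFac x α r := by rw [Real.rpow_natCast, mul_pow]; ring
      _ = (n:ℝ) ^ r * risingFac x α r := by
          rw [hzval, div_mul_cancel₀ _ hc0.ne']
  refine (Function.Injective.hasSum_iff (add_left_injective r) ?_).1 ?_
  · intro i hi
    have hri : ¬ r ≤ i := fun hle => hi ⟨i - r, by show i - r + r = i; omega⟩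
    rw [hf]
    simp only [lahG, if_neg hri, mul_zero]
  · have heq : (f ∘ (· + r))
        = fun j => (C * z ^ r * risingFac x α r) *
            (risingFac (x + r*α) α j * z ^ j / (Nat.factorial j : ℝ)) := by
      funext j
      simp only [Function.comp_apply, hf]
      rw [lahG, if_pos (Nat.le_add_left r j), Nat.add_sub_cancel,
        show j + r = r + j by omega, risingFac_add, pow_add]
      ring
    rw [heq, ← hval]
    exact hb


lemma szasz_integrable (n : ℕ) (hn : 0 < n) (i k : ℕ) :
    IntegrableOn (fun u : ℝ => szaszBasis n i u * u ^ k) (Set.Ioi 0) := by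
  have hn' : (0:ℝ) < n := by exact_mod_cast hn
  have h : IntegrableOn
      (fun u : ℝ => ((n:ℝ)^i / (Nat.factorial i : ℝ)) * (u ^ (i+k) * Real.exp (-((n:ℝ) * u))))
      (Set.Ioi 0) := (integrableOn_pow_mul_exp hn' (i + k)).const_mul _
  refine h.congr_fun (fun u hu => ?_) measurableSet_Ioi
  have hfi : ((Nat.factorial i : ℝ)) ≠ 0 := Nat.cast_ne_zero.2 i.factorial_ne_zero
  beta_reduce
  rw [szaszBasis, mul_pow, pow_add, neg_mul]
  field_simp

lemma szasz_integral (n : ℕ) (hn : 0 < n) (i k : ℕ) :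
    ∫ u in Set.Ioi (0:ℝ), szaszBasis n i u * u ^ k
      = ((i+k).factorial : ℝ) / ((i.factorial : ℝ) * (n:ℝ) ^ (k+1)) := by
  have hn' : (0:ℝ) < n := by exact_mod_cast hn
  have hfi : ((Nat.factorial i : ℝ)) ≠ 0 := Nat.cast_ne_zero.2 i.factorial_ne_zero
  have e : ∫ u in Set.Ioi (0:ℝ), szaszBasis n i u * u ^ k
      = ∫ u in Set.Ioi (0:ℝ),
          ((n:ℝ)^i / (Nat.factorial i : ℝ)) * (u ^ (i+k) * Real.exp (-((n:ℝ) * u))) := by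
    refine setIntegral_congr_fun measurableSet_Ioi (fun u hu => ?_)
    rw [szaszBasis, mul_pow, pow_add, neg_mul]
    field_simp
  rw [e, MeasureTheory.integral_const_mul, integral_pow_mul_exp hn' (i+k),
    show i + k + 1 = i + (k+1) from by omega, pow_add]
  field_simp

lemma szasz_integral_sub3 (n : ℕ) (hn : 0 < n) (i : ℕ) (x : ℝ) :
    ∫ u in Set.Ioi (0:ℝ), szaszBasis n i u * (u - x) ^ 3
      = ((i+3).factorial : ℝ) / ((i.factorial:ℝ) * (n:ℝ)^4)
        - 3*x*(((i+2).factorial : ℝ) / ((i.factorial:ℝ) * (n:ℝ)^3))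
        + 3*x^2*(((i+1).factorial : ℝ) / ((i.factorial:ℝ) * (n:ℝ)^2))
        - x^3 / (n:ℝ) := by
  have h0 := szasz_integrable n hn i 0
  have h1 := szasz_integrable n hn i 1
  have h2 := szasz_integrable n hn i 2
  have h3 := szasz_integrable n hn i 3
  have hfi : ((Nat.factorial i : ℝ)) ≠ 0 := Nat.cast_ne_zero.2 i.factorial_ne_zero
  have e : (fun u : ℝ => szaszBasis n i u * (u - x)^3)
      = fun u => szaszBasis n i u * u^3 + ((-(3*x)) * (szaszBasis n i u * u^2)
        + ((3*x^2) * (szaszBasis n i u * u^1) + ((-(x^3)) * (szaszBasis n i u * u^0)))) :=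
    funext fun u => by ring
  have hga : IntegrableOn (fun u : ℝ => (3*x^2) * (szaszBasis n i u * u^1)
      + (-(x^3)) * (szaszBasis n i u * u^0)) (Set.Ioi 0) :=
    (h1.const_mul _).add (h0.const_mul _)
  have hgb : IntegrableOn (fun u : ℝ => (-(3*x)) * (szaszBasis n i u * u^2)
      + ((3*x^2) * (szaszBasis n i u * u^1) + (-(x^3)) * (szaszBasis n i u * u^0)))
      (Set.Ioi 0) := (h2.const_mul _).add hga
  rw [e, MeasureTheory.integral_add h3 hgb,
    MeasureTheory.integral_add (h2.const_mul _) hga,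
    MeasureTheory.integral_add (h1.const_mul _) (h0.const_mul _),
    MeasureTheory.integral_const_mul, MeasureTheory.integral_const_mul,
    MeasureTheory.integral_const_mul,
    szasz_integral n hn i 3, szasz_integral n hn i 2, szasz_integral n hn i 1,
    szasz_integral n hn i 0]
  have hn' : ((n:ℝ)) ≠ 0 := by positivity
  field_simp
  ring

lemma szasz_integral_sub4 (n : ℕ) (hn : 0 < n) (i : ℕ) (x : ℝ) :
    ∫ u in Set.Ioi (0:ℝ), szaszBasis n i u * (u - x) ^ 4
      = ((i+4).factorial : ℝ) / ((i.factorial:ℝ) * (n:ℝ)^5)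
        - 4*x*(((i+3).factorial : ℝ) / ((i.factorial:ℝ) * (n:ℝ)^4))
        + 6*x^2*(((i+2).factorial : ℝ) / ((i.factorial:ℝ) * (n:ℝ)^3))
        - 4*x^3*(((i+1).factorial : ℝ) / ((i.factorial:ℝ) * (n:ℝ)^2))
        + x^4 / (n:ℝ) := by
  have h0 := szasz_integrable n hn i 0
  have h1 := szasz_integrable n hn i 1
  have h2 := szasz_integrable n hn i 2
  have h3 := szasz_integrable n hn i 3
  have h4 := szasz_integrable n hn i 4
  have hfi : ((Nat.factorial i : ℝ)) ≠ 0 := Nat.cast_ne_zero.2 i.factorial_ne_zero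
  have e : (fun u : ℝ => szaszBasis n i u * (u - x)^4)
      = fun u => szaszBasis n i u * u^4 + ((-(4*x)) * (szaszBasis n i u * u^3)
        + ((6*x^2) * (szaszBasis n i u * u^2) + ((-(4*x^3)) * (szaszBasis n i u * u^1)
        + (x^4) * (szaszBasis n i u * u^0)))) :=
    funext fun u => by ring
  have hga : IntegrableOn (fun u : ℝ => (-(4*x^3)) * (szaszBasis n i u * u^1)
      + (x^4) * (szaszBasis n i u * u^0)) (Set.Ioi 0) :=
    (h1.const_mul _).add (h0.const_mul _)
  have hgb : IntegrableOn (fun u : ℝ => (6*x^2) * (szaszBasis n i u * u^2)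
      + ((-(4*x^3)) * (szaszBasis n i u * u^1) + (x^4) * (szaszBasis n i u * u^0)))
      (Set.Ioi 0) := (h2.const_mul _).add hga
  have hgc : IntegrableOn (fun u : ℝ => (-(4*x)) * (szaszBasis n i u * u^3)
      + ((6*x^2) * (szaszBasis n i u * u^2) + ((-(4*x^3)) * (szaszBasis n i u * u^1)
      + (x^4) * (szaszBasis n i u * u^0)))) (Set.Ioi 0) := (h3.const_mul _).add hgb
  rw [e, MeasureTheory.integral_add h4 hgc,
    MeasureTheory.integral_add (h3.const_mul _) hgb,
    MeasureTheory.integral_add (h2.const_mul _) hga,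
    MeasureTheory.integral_add (h1.const_mul _) (h0.const_mul _),
    MeasureTheory.integral_const_mul, MeasureTheory.integral_const_mul,
    MeasureTheory.integral_const_mul, MeasureTheory.integral_const_mul,
    szasz_integral n hn i 4, szasz_integral n hn i 3, szasz_integral n hn i 2,
    szasz_integral n hn i 1, szasz_integral n hn i 0]
  have hn' : ((n:ℝ)) ≠ 0 := by positivity
  field_simp
  ring


theorem stmt5 (n : ℕ) (hn : 0 < n) (α : ℝ) (hα : 0 < α) (hαn : α ≤ 1 / n)
    (x : ℝ) (hx : 0 ≤ x) :
    theta n α 3 x =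
      (2 * α ^ 2 * n ^ 3 * x + 9 * α * n ^ 2 * x + 12 * n * x + 6) / (n : ℝ) ^ 3 ∧
    theta n α 4 x =
      (3 * α ^ 2 * n ^ 4 * x * (2 * α + x) + 4 * α * n ^ 3 * x * (8 * α + 3 * x) +
        12 * n ^ 2 * x * (6 * α + x) + 72 * n * x + 24) / (n : ℝ) ^ 4 := by
  have hn' : (0:ℝ) < n := by exact_mod_cast hn
  have hnne : ((n:ℝ)) ≠ 0 := hn'.ne'
  have hzp : ∀ i : ℕ, (α + 1 / (n:ℝ)) ^ (-(i:ℤ)) = ((α + 1/(n:ℝ))⁻¹) ^ i := by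
    intro i
    rw [zpow_neg, inv_pow, zpow_natCast]
  have h0 := hasSum_fr n hn hα hx 0
  have h1 := hasSum_fr n hn hα hx 1
  have h2 := hasSum_fr n hn hα hx 2
  have h3 := hasSum_fr n hn hα hx 3
  have h4 := hasSum_fr n hn hα hx 4
  constructor
  · -- third moment
    have hterm : ∀ i : ℕ,
        (1 + (n:ℝ) * α) ^ (-x / α) * (α + 1 / (n:ℝ)) ^ (-(i:ℤ)) *
          (risingFac x α i / (Nat.factorial i : ℝ)) *
          ∫ u in Set.Ioi (0:ℝ), szaszBasis n i u * (u - x) ^ 3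
        = (1/(n:ℝ)^4) * ((1 + (n:ℝ)*α) ^ (-x/α) * ((α + 1/(n:ℝ))⁻¹) ^ i *
              risingFac x α i * lahG 3 i)
          + (9/(n:ℝ)^4 - 3*x/(n:ℝ)^3) * ((1 + (n:ℝ)*α) ^ (-x/α) * ((α + 1/(n:ℝ))⁻¹) ^ i *
              risingFac x α i * lahG 2 i)
          + (18/(n:ℝ)^4 - 12*x/(n:ℝ)^3 + 3*x^2/(n:ℝ)^2) *
              ((1 + (n:ℝ)*α) ^ (-x/α) * ((α + 1/(n:ℝ))⁻¹) ^ i *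
              risingFac x α i * lahG 1 i)
          + (6/(n:ℝ)^4 - 6*x/(n:ℝ)^3 + 3*x^2/(n:ℝ)^2 - x^3/(n:ℝ)) *
              ((1 + (n:ℝ)*α) ^ (-x/α) * ((α + 1/(n:ℝ))⁻¹) ^ i *
              risingFac x α i * lahG 0 i) := by
      intro i
      rw [szasz_integral_sub3 n hn i x, hzp i]
      have l3 := lah3 i
      have l2 := lah2 i
      have l1 := lah1 i
      have l0 := lahG_zero i
      set C := (1 + (n:ℝ)*α) ^ (-x/α) with hC
      set Z := ((α + 1/(n:ℝ))⁻¹) ^ i with hZ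
      set R := risingFac x α i with hR
      linear_combination (C*Z*R/(n:ℝ)^4) * l3 - (3*x*C*Z*R/(n:ℝ)^3) * l2
        + (3*x^2*C*Z*R/(n:ℝ)^2) * l1 + (x^3*C*Z*R/(n:ℝ)) * l0
    have hc := (((h3.mul_left (1/(n:ℝ)^4)).add
        (h2.mul_left (9/(n:ℝ)^4 - 3*x/(n:ℝ)^3))).add
        (h1.mul_left (18/(n:ℝ)^4 - 12*x/(n:ℝ)^3 + 3*x^2/(n:ℝ)^2))).add
        (h0.mul_left (6/(n:ℝ)^4 - 6*x/(n:ℝ)^3 + 3*x^2/(n:ℝ)^2 - x^3/(n:ℝ)))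
    simp only [theta, U]
    rw [tsum_congr hterm, hc.tsum_eq]
    simp only [risingFac_def, Finset.prod_range_succ, Finset.prod_range_zero]
    push_cast
    field_simp
    ring
  · -- fourth moment
    have hterm : ∀ i : ℕ,
        (1 + (n:ℝ) * α) ^ (-x / α) * (α + 1 / (n:ℝ)) ^ (-(i:ℤ)) *
          (risingFac x α i / (Nat.factorial i : ℝ)) *
          ∫ u in Set.Ioi (0:ℝ), szaszBasis n i u * (u - x) ^ 4
        = (1/(n:ℝ)^5) * ((1 + (n:ℝ)*α) ^ (-x/α) * ((α + 1/(n:ℝ))⁻¹) ^ i *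
              risingFac x α i * lahG 4 i)
          + (16/(n:ℝ)^5 - 4*x/(n:ℝ)^4) * ((1 + (n:ℝ)*α) ^ (-x/α) * ((α + 1/(n:ℝ))⁻¹) ^ i *
              risingFac x α i * lahG 3 i)
          + (72/(n:ℝ)^5 - 36*x/(n:ℝ)^4 + 6*x^2/(n:ℝ)^3) *
              ((1 + (n:ℝ)*α) ^ (-x/α) * ((α + 1/(n:ℝ))⁻¹) ^ i *
              risingFac x α i * lahG 2 i)
          + (96/(n:ℝ)^5 - 72*x/(n:ℝ)^4 + 24*x^2/(n:ℝ)^3 - 4*x^3/(n:ℝ)^2) *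
              ((1 + (n:ℝ)*α) ^ (-x/α) * ((α + 1/(n:ℝ))⁻¹) ^ i *
              risingFac x α i * lahG 1 i)
          + (24/(n:ℝ)^5 - 24*x/(n:ℝ)^4 + 12*x^2/(n:ℝ)^3 - 4*x^3/(n:ℝ)^2 + x^4/(n:ℝ)) *
              ((1 + (n:ℝ)*α) ^ (-x/α) * ((α + 1/(n:ℝ))⁻¹) ^ i *
              risingFac x α i * lahG 0 i) := by
      intro i
      rw [szasz_integral_sub4 n hn i x, hzp i]
      have l4 := lah4 i
      have l3 := lah3 i
      have l2 := lah2 i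
      have l1 := lah1 i
      have l0 := lahG_zero i
      set C := (1 + (n:ℝ)*α) ^ (-x/α) with hC
      set Z := ((α + 1/(n:ℝ))⁻¹) ^ i with hZ
      set R := risingFac x α i with hR
      linear_combination (C*Z*R/(n:ℝ)^5) * l4 - (4*x*C*Z*R/(n:ℝ)^4) * l3
        + (6*x^2*C*Z*R/(n:ℝ)^3) * l2 - (4*x^3*C*Z*R/(n:ℝ)^2) * l1
        - (x^4*C*Z*R/(n:ℝ)) * l0
    have hc := ((((h4.mul_left (1/(n:ℝ)^5)).add
        (h3.mul_left (16/(n:ℝ)^5 - 4*x/(n:ℝ)^4))).add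
        (h2.mul_left (72/(n:ℝ)^5 - 36*x/(n:ℝ)^4 + 6*x^2/(n:ℝ)^3))).add
        (h1.mul_left (96/(n:ℝ)^5 - 72*x/(n:ℝ)^4 + 24*x^2/(n:ℝ)^3 - 4*x^3/(n:ℝ)^2))).add
        (h0.mul_left (24/(n:ℝ)^5 - 24*x/(n:ℝ)^4 + 12*x^2/(n:ℝ)^3 - 4*x^3/(n:ℝ)^2 + x^4/(n:ℝ)))
    simp only [theta, U]
    rw [tsum_congr hterm, hc.tsum_eq]
    simp only [risingFac_def, Finset.prod_range_succ, Finset.prod_range_zero]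
    push_cast
    field_simp
    ring
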